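/- Let N be an admissible algebra with pointing ω and W = ker(ω). Then the algebra W with product x∙y defined by ω(x∙y · z) interpreted via ω₂(x∙y,z) = ω₃(x,y,z) is isomorphic to the quotient algebra N/Ann(N); in particular its nil-index equals ν(N) − 1 when dim N > 1. -/

import Mathlib

/-- `pw F N k` is the characteristic ideal `N^k`. -/
def pw (F N : Type*) [Field F] [NonUnitalNonAssocRing N] [Module F N] : ℕ → Submodule F N
  | 0 => ⊤
  | 1 => ⊤
  | (k+2) => Submodule.span F {z : N | ∃ x : N, ∃ y ∈ pw F N (k+1), z = x * y}

/-- The annihilator `Ann(N) = {x | x·N = 0}` of a commutative algebra `N`. -/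
def annSub (F N : Type*) [Field F] [NonUnitalCommRing N] [Module F N]
    [SMulCommClass F N N] [IsScalarTower F N N] : Submodule F N where
  carrier := {x | ∀ y : N, x * y = 0}
  add_mem' := by intro a b ha hb y; simp [add_mul, ha y, hb y]
  zero_mem' := by intro y; simp
  smul_mem' := by intro c x hx y; rw [smul_mul_assoc, hx y, smul_zero]

section Aux
variable {F N : Type*} [Field F] [NonUnitalCommRing N] [Module F N]
  [SMulCommClass F N N] [IsScalarTower F N N]

lemma mul_mem_pw : ∀ (k : ℕ) (x y : N), y ∈ pw F N k → x * y ∈ pw F N (k+1)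
  | 0, x, y, _ => by simp [pw]
  | 1, x, y, _ => Submodule.subset_span ⟨x, y, by simp [pw], rfl⟩
  | (j+2), x, y, hy => by
    refine Submodule.span_induction ?_ ?_ ?_ ?_ hy
    · rintro _ ⟨x', y', hy', rfl⟩
      exact Submodule.subset_span ⟨x, x' * y', mul_mem_pw (j+1) x' y' hy', rfl⟩
    · simpa using (pw F N (j+3)).zero_mem
    · intro a b _ _ ha hb; rw [mul_add]; exact add_mem ha hb
    · intro c a _ ha; rw [mul_smul_comm]; exact Submodule.smul_mem _ c ha

lemma pw_succ_le : ∀ (k : ℕ), pw F N (k+1) ≤ pw F N k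
  | 0 => le_rfl
  | 1 => le_top
  | (j+2) => by
    refine Submodule.span_le.2 ?_
    rintro _ ⟨x, y, hy, rfl⟩
    exact mul_mem_pw (j+1) x y (pw_succ_le (j+1) hy)

lemma pw_le_pw {j k : ℕ} (h : j ≤ k) : pw F N k ≤ pw F N j := by
  induction h with
  | refl => exact le_rfl
  | step h ih => exact le_trans (pw_succ_le _) ih

lemma foldl_mem_pw : ∀ (l : List N) (x : N) (k : ℕ), x ∈ pw F N k →
    l.foldl (· * ·) x ∈ pw F N (k + l.length)
  | [], x, k, hx => by simpa using hx
  | y :: l, x, k, hx => by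
    have h := foldl_mem_pw l (x * y) (k+1) (by rw [mul_comm]; exact mul_mem_pw k y x hx)
    rw [List.foldl_cons]
    have he : k + 1 + l.length = k + (y :: l).length := by simp; omega
    rw [he] at h
    exact h

lemma mul_foldl : ∀ (l : List N) (x y : N),
    x * l.foldl (· * ·) y = l.foldl (· * ·) (x * y)
  | [], x, y => rfl
  | z :: l, x, y => by
    show x * l.foldl (· * ·) (y * z) = l.foldl (· * ·) (x * y * z)
    rw [mul_foldl l x (y * z), mul_assoc]

lemma exists_foldl_ann (ν : ℕ) (hnil : pw F N (ν + 1) = ⊥) :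
    ∀ (k : ℕ) (n : N), n ≠ 0 → n ∈ pw F N (ν + 1 - k) →
    ∃ l : List N, l.foldl (· * ·) n ∈ annSub F N ∧ l.foldl (· * ·) n ≠ 0
  | 0, n, hn, hmem => absurd (hnil ▸ hmem) (by simpa using hn)
  | (k+1), n, hn, hmem => by
    by_cases h : ∀ z : N, n * z = 0
    · exact ⟨[], h, hn⟩
    · push_neg at h
      obtain ⟨z, hz⟩ := h
      have h1 : n * z ∈ pw F N ((ν + 1 - (k+1)) + 1) := by
        have := mul_mem_pw _ z n hmem
        rwa [mul_comm] at this
      have h2 : n * z ∈ pw F N (ν + 1 - k) := pw_le_pw (by omega) h1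
      obtain ⟨l, hl1, hl2⟩ := exists_foldl_ann ν hnil k (n * z) hz h2
      exact ⟨z :: l, hl1, hl2⟩

lemma foldl_congr_ann : ∀ (l : List N) (u u' : N), u - u' ∈ annSub F N →
    l.foldl (· * ·) u - l.foldl (· * ·) u' ∈ annSub F N
  | [], u, u', h => h
  | y :: l, u, u', h => by
    have he : u * y = u' * y := by
      have := h y
      rw [sub_mul, sub_eq_zero] at this
      exact this
    rw [List.foldl_cons, List.foldl_cons, he]
    exact foldl_congr_ann l (u' * y) (u' * y) (by simp)

lemma pw_le_span_foldl : ∀ (k : ℕ), pw F N k ≤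
    Submodule.span F {z : N | ∃ (x : N) (l : List N), l.length = k - 1 ∧ z = l.foldl (· * ·) x}
  | 0 => by
    intro n _
    exact Submodule.subset_span ⟨n, [], rfl, rfl⟩
  | 1 => by
    intro n _
    exact Submodule.subset_span ⟨n, [], rfl, rfl⟩
  | (j+2) => by
    refine Submodule.span_le.2 ?_
    rintro _ ⟨x, y, hy, rfl⟩
    have hy' := pw_le_span_foldl (j+1) hy
    have hmap : ∀ w ∈ Submodule.span F {z : N | ∃ (x : N) (l : List N), l.length = j ∧ z = l.foldl (· * ·) x},
        x * w ∈ Submodule.span F {z : N | ∃ (x : N) (l : List N), l.length = j+1 ∧ z = l.foldl (· * ·) x} := by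
      intro w hw
      refine Submodule.span_induction ?_ (by simp) ?_ ?_ hw
      · rintro _ ⟨x', l, hl, rfl⟩
        refine Submodule.subset_span ⟨x, x' :: l, by simp [hl], ?_⟩
        rw [List.foldl_cons, mul_foldl]
      · intro a b _ _ ha hb; rw [mul_add]; exact add_mem ha hb
      · intro c a _ ha; rw [mul_smul_comm]; exact Submodule.smul_mem _ c ha
    simpa using hmap y hy'

lemma mem_annSub_iff {x : N} : x ∈ annSub F N ↔ ∀ y : N, x * y = 0 := Iff.rfl

lemma foldl_map_ann (proj : N → N) (hproj : ∀ n : N, n - proj n ∈ annSub F N) :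
    ∀ (l : List N) (x x' : N), x - x' ∈ annSub F N →
    l.foldl (· * ·) x - (l.map proj).foldl (· * ·) x' ∈ annSub F N
  | [], x, x', h => h
  | y :: l, x, x', h => by
    have h1 : (x - x') * y = 0 := h y
    have h2 : x' * (y - proj y) = 0 := by
      rw [mul_comm]; exact hproj y x'
    have he : x * y = x' * proj y := by
      have hsum : x * y - x' * proj y = (x - x') * y + x' * (y - proj y) := by
        rw [sub_mul, mul_sub]; abel
      rw [h1, h2, add_zero] at hsum
      exact sub_eq_zero.1 hsum
    rw [List.foldl_cons, List.map_cons, List.foldl_cons, he]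
    exact foldl_map_ann proj hproj l (x' * proj y) (x' * proj y) (by simp)

lemma ann_ker [FiniteDimensional F N] (hAnn : Module.finrank F (annSub F N) = 1)
    {a : N} (ha : a ∈ annSub F N) {ω : N →ₗ[F] F} (hωa : ω a ≠ 0) :
    ∀ u ∈ annSub F N, ω u = 0 → u = 0 := by
  have ha0 : a ≠ 0 := fun h => hωa (by simp [h])
  have hspan : Submodule.span F {a} ≤ annSub F N := by
    rw [Submodule.span_le, Set.singleton_subset_iff]; exact ha
  have heq : Submodule.span F {a} = annSub F N :=
    Submodule.eq_of_le_of_finrank_le hspan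
      (by rw [hAnn, finrank_span_singleton ha0])
  intro u hu hωu
  rw [← heq, Submodule.mem_span_singleton] at hu
  obtain ⟨c, rfl⟩ := hu
  rw [map_smul, smul_eq_mul] at hωu
  have hc : c = 0 := (mul_eq_zero.mp hωu).resolve_right hωa
  simp [hc]

end Aux

/-- Let `N` be an admissible algebra of nil-index `ν` with pointing `ω`,
`W = ker ω`, and let `m : W → W → W` be the product `x∙y` characterized by
`ω₂(x∙y, z) = ω₃(x,y,z)`, i.e. `ω((x∙y)·z) = ω((x·y)·z)` for all `z ∈ W`.  Then `W` with
this product is isomorphic to `N/Ann(N)` (via `x ↦ x + Ann(N)`), and if `dim N > 1` the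
nil-index of `(W, ∙)` equals `ν − 1`: every `∙`-product of `ν` elements of `W` vanishes
while some `∙`-product of `ν − 1` elements does not. -/
theorem stmt14 {F N : Type*} [Field F] [CharZero F] [NonUnitalCommRing N] [Module F N]
    [SMulCommClass F N N] [IsScalarTower F N N] [FiniteDimensional F N]
    (hAnn : Module.finrank F (annSub F N) = 1)
    (ν : ℕ) (hnil : pw F N (ν + 1) = ⊥) (hne : pw F N ν ≠ ⊥)
    (ω : N →ₗ[F] F) (hω : ∃ a ∈ annSub F N, ω a ≠ 0)
    (m : ↥(LinearMap.ker ω) → ↥(LinearMap.ker ω) → ↥(LinearMap.ker ω))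
    (hm : ∀ x y z : ↥(LinearMap.ker ω), ω ((m x y : N) * z) = ω (((x : N) * y) * z)) :
    Function.Bijective
      (fun x : ↥(LinearMap.ker ω) => (Submodule.Quotient.mk (x : N) : N ⧸ annSub F N)) ∧
    (∀ x y : ↥(LinearMap.ker ω),
      (Submodule.Quotient.mk ((m x y : N)) : N ⧸ annSub F N)
        = Submodule.Quotient.mk ((x : N) * y)) ∧
    (1 < Module.finrank F N →
      (∀ (x : ↥(LinearMap.ker ω)) (l : List ↥(LinearMap.ker ω)),
          l.length = ν - 1 → l.foldl m x = 0) ∧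
      (∃ (x : ↥(LinearMap.ker ω)) (l : List ↥(LinearMap.ker ω)),
          l.length = ν - 2 ∧ l.foldl m x ≠ 0)) := by
  obtain ⟨a, haAnn, haω⟩ := hω
  have hzero : ∀ u ∈ annSub F N, ω u = 0 → u = 0 := ann_ker hAnn haAnn haω
  set proj : N → N := fun n => n - (ω n / ω a) • a with hproj_def
  have hprojW : ∀ n : N, proj n ∈ LinearMap.ker ω := by
    intro n
    rw [LinearMap.mem_ker]
    simp only [hproj_def, map_sub, map_smul, smul_eq_mul]
    field_simp
    simp
  have hprojAnn : ∀ n : N, n - proj n ∈ annSub F N := by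
    intro n
    have he : n - proj n = (ω n / ω a) • a := by simp [hproj_def]
    rw [he]
    exact Submodule.smul_mem _ _ haAnn
  -- the radical of ω₂ is contained in the annihilator
  have hrad : ∀ d : N, (∀ z : N, ω (d * z) = 0) → d ∈ annSub F N := by
    intro d hd
    by_contra hcon
    rw [mem_annSub_iff] at hcon
    push_neg at hcon
    obtain ⟨z, hz⟩ := hcon
    have hmem : d * z ∈ pw F N (ν + 1 - (ν + 1)) := by
      rw [Nat.sub_self]
      exact Submodule.mem_top
    obtain ⟨l, hl1, hl2⟩ := exists_foldl_ann ν hnil (ν + 1) (d * z) hz hmem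
    have hu : l.foldl (· * ·) (d * z) = d * l.foldl (· * ·) z := (mul_foldl l d z).symm
    have hωu : ω (l.foldl (· * ·) (d * z)) = 0 := by rw [hu]; exact hd _
    exact hl2 (hzero _ hl1 hωu)
  -- the product m agrees with multiplication modulo the annihilator
  have hm2 : ∀ x y : ↥(LinearMap.ker ω), (m x y : N) - (x : N) * y ∈ annSub F N := by
    intro x y
    apply hrad
    intro z
    have h1 : ω (((m x y : N) - (x : N) * y) * proj z) = 0 := by
      rw [sub_mul, map_sub, hm x y ⟨proj z, hprojW z⟩, sub_self]
    have h2 : ((m x y : N) - (x : N) * y) * z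
        = ((m x y : N) - (x : N) * y) * proj z := by
      have h3 : (z - proj z) * ((m x y : N) - (x : N) * y) = 0 := hprojAnn z _
      rw [sub_mul, sub_eq_zero] at h3
      rw [mul_comm _ z, h3, mul_comm]
    rw [h2, h1]
  -- foldl with m agrees with foldl with * modulo annihilator
  have hfold : ∀ (l : List ↥(LinearMap.ker ω)) (x : ↥(LinearMap.ker ω)),
      Subtype.val (l.foldl m x) - (l.map Subtype.val).foldl (· * ·) (x : N) ∈ annSub F N := by
    intro l
    induction l with
    | nil => intro x; simpa using (annSub F N).zero_mem
    | cons y l ih =>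
      intro x
      rw [List.foldl_cons, List.map_cons, List.foldl_cons]
      have h1 := ih (m x y)
      have h2 := foldl_congr_ann (l.map Subtype.val) ((m x y : N)) ((x : N) * y) (hm2 x y)
      have h3 := add_mem h1 h2
      have he : Subtype.val (List.foldl m (m x y) l)
          - (l.map Subtype.val).foldl (· * ·) ((x : N) * y)
          = (Subtype.val (List.foldl m (m x y) l)
              - (l.map Subtype.val).foldl (· * ·) (Subtype.val (m x y)))
            + ((l.map Subtype.val).foldl (· * ·) (Subtype.val (m x y))
              - (l.map Subtype.val).foldl (· * ·) ((x : N) * y)) := by abel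
      rw [he]
      exact h3
  have hinj : Function.Injective
      (fun x : ↥(LinearMap.ker ω) => (Submodule.Quotient.mk (x : N) : N ⧸ annSub F N)) := by
    intro x y h
    rw [Submodule.Quotient.eq] at h
    have hω0 : ω ((x : N) - y) = 0 := by
      rw [map_sub, LinearMap.mem_ker.1 x.2, LinearMap.mem_ker.1 y.2, sub_zero]
    have := hzero _ h hω0
    exact Subtype.ext (sub_eq_zero.1 this)
  refine ⟨⟨hinj, ?_⟩, ?_, ?_⟩
  · -- surjectivity
    intro q
    obtain ⟨n, rfl⟩ := Submodule.Quotient.mk_surjective _ q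
    refine ⟨⟨proj n, hprojW n⟩, ?_⟩
    show (Submodule.Quotient.mk (proj n) : N ⧸ annSub F N) = Submodule.Quotient.mk n
    rw [Submodule.Quotient.eq]
    have := (annSub F N).neg_mem (hprojAnn n)
    simpa using this
  · -- the products agree in the quotient
    intro x y
    rw [Submodule.Quotient.eq]
    exact hm2 x y
  · intro hdim
    have hν : 2 ≤ ν := by
      by_contra h
      push_neg at h
      interval_cases ν
      · have htop : (⊤ : Submodule F N) = ⊥ := hnil
        have hx : ∀ x : N, x = 0 := fun x =>
          (Submodule.mem_bot F).1 (htop ▸ Submodule.mem_top)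
        have : Subsingleton N := ⟨fun u v => by rw [hx u, hx v]⟩
        have h0 : Module.finrank F N = 0 := Module.finrank_zero_of_subsingleton
        omega
      · have hall : ∀ x y : N, x * y = 0 := fun x y =>
          (Submodule.mem_bot F).1 (hnil ▸ mul_mem_pw 1 x y Submodule.mem_top)
        have heq : annSub F N = ⊤ := by
          rw [Submodule.eq_top_iff']
          intro n
          exact fun y => hall n y
        rw [heq, finrank_top] at hAnn
        omega
    constructor
    · -- every product of ν elements vanishes
      intro x l hl
      have hx1 : (x : N) ∈ pw F N 1 := Submodule.mem_top
      have hp : (l.map Subtype.val).foldl (· * ·) (x : N) ∈ pw F N (1 + (ν - 1)) := by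
        have := foldl_mem_pw (l.map Subtype.val) (x : N) 1 hx1
        rwa [List.length_map, hl] at this
      have hpAnn : (l.map Subtype.val).foldl (· * ·) (x : N) ∈ annSub F N := by
        rw [mem_annSub_iff]
        intro y
        have h1 : (l.map Subtype.val).foldl (· * ·) (x : N) * y
            ∈ pw F N ((1 + (ν - 1)) + 1) := by
          have := mul_mem_pw _ y _ hp
          rwa [mul_comm] at this
        have h2 := pw_le_pw (F := F) (N := N) (show ν + 1 ≤ 1 + (ν - 1) + 1 by omega) h1
        rw [hnil] at h2
        exact (Submodule.mem_bot F).1 h2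
      have hvalAnn : Subtype.val (l.foldl m x) ∈ annSub F N := by
        have h3 := add_mem (hfold l x) hpAnn
        have he : Subtype.val (l.foldl m x)
            = (Subtype.val (l.foldl m x) - (l.map Subtype.val).foldl (· * ·) (x : N))
              + (l.map Subtype.val).foldl (· * ·) (x : N) := by abel
        rw [he]
        exact h3
      have hωv : ω (Subtype.val (l.foldl m x)) = 0 := LinearMap.mem_ker.1 (l.foldl m x).2
      exact Subtype.ext (by simpa using hzero _ hvalAnn hωv)
    · -- some product of ν - 1 elements does not vanish
      have hS : ∃ (x : N) (l : List N), l.length = ν - 1 ∧ l.foldl (· * ·) x ≠ 0 := by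
        by_contra h
        push_neg at h
        apply hne
        refine le_bot_iff.1 (le_trans (pw_le_span_foldl ν) ?_)
        rw [le_bot_iff, Submodule.span_eq_bot]
        rintro z ⟨x, l, hl, rfl⟩
        exact h x l hl
      obtain ⟨x, l, hl, hp⟩ := hS
      rcases List.eq_nil_or_concat l with rfl | ⟨l₀, z, rfl⟩
      · simp at hl; omega
      have hl₀ : l₀.length = ν - 2 := by
        simp at hl; omega
      rw [List.concat_eq_append, List.foldl_append, List.foldl_cons, List.foldl_nil] at hp
      have hp₀ : l₀.foldl (· * ·) x ∉ annSub F N := fun h => hp (h z)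
      refine ⟨⟨proj x, hprojW x⟩, l₀.map (fun n => (⟨proj n, hprojW n⟩ : ↥(LinearMap.ker ω))), ?_, ?_⟩
      · rw [List.length_map, hl₀]
      · intro h0
        apply hp₀
        have hmapval : (l₀.map (fun n => (⟨proj n, hprojW n⟩ : ↥(LinearMap.ker ω)))).map Subtype.val
            = l₀.map proj := by
          rw [List.map_map]
          rfl
        have h4 := hfold (l₀.map (fun n => (⟨proj n, hprojW n⟩ : ↥(LinearMap.ker ω)))) ⟨proj x, hprojW x⟩
        rw [h0, hmapval] at h4
        have hq : (l₀.map proj).foldl (· * ·) (proj x) ∈ annSub F N := by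
          have h9 := (annSub F N).neg_mem h4
          have he : -(Subtype.val (0 : ↥(LinearMap.ker ω))
              - (l₀.map proj).foldl (· * ·) (proj x))
              = (l₀.map proj).foldl (· * ·) (proj x) := by
            have h8 : Subtype.val (0 : ↥(LinearMap.ker ω)) = (0 : N) := rfl
            rw [h8, zero_sub, neg_neg]
          rwa [he] at h9
        have h5 := foldl_map_ann proj hprojAnn l₀ x (proj x) (hprojAnn x)
        have h6 := add_mem h5 hq
        have he2 : l₀.foldl (· * ·) x
            = (l₀.foldl (· * ·) x - (l₀.map proj).foldl (· * ·) (proj x))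
              + (l₀.map proj).foldl (· * ·) (proj x) := by abel
        rw [he2]
        exact h6
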